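/- Let σ ∈ ℕ^m with σ ≠ 0 and let s ≥ 1. If f ∈ V_{A,σ} satisfies π^{(s)}(f) = 0, then π^{(s-1)}(f) = 0; that is, ker(π^{(s)}|_{V_{A,σ}}) ⊆ ker(π^{(s-1)}|_{V_{A,σ}}). -/
import Mathlib


open MvPolynomial

/-- The monomial `e^a = e_1^{a_1} ⋯ e_n^{a_n}` in `K[e_1,…,e_n]`. -/
noncomputable def eMon (K : Type*) [CommSemiring K] {n : ℕ} (a : Fin n → ℕ) :
    MvPolynomial (Fin n) K :=
  ∏ i, X i ^ a i

/-- The monomial map `φ_A : K[e_1,…,e_n] → K[x_1,…,x_m]`, `e_i ↦ x^{ς_i}` where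
`ς_i` is the `i`-th column of `A`. -/
noncomputable def phiA (K : Type*) [CommSemiring K] {m n : ℕ}
    (A : Matrix (Fin m) (Fin n) ℕ) :
    MvPolynomial (Fin n) K →ₐ[K] MvPolynomial (Fin m) K :=
  aeval fun i => ∏ j, X j ^ A j i

/-- The toric ideal `I_A = ker φ_A`. -/
noncomputable def toricIdeal (K : Type*) [CommRing K] {m n : ℕ}
    (A : Matrix (Fin m) (Fin n) ℕ) : Ideal (MvPolynomial (Fin n) K) :=
  RingHom.ker (phiA K A).toRingHom

/-- The `K`-linear map `π^{(s)}` sending `e^α ↦ α ⊗ ⋯ ⊗ α` (s factors), where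
`(K^n)^{⊗ s}` is identified with functions `(Fin s → Fin n) → K`. -/
noncomputable def piMap (K : Type*) [CommSemiring K] {n : ℕ} (s : ℕ)
    (f : MvPolynomial (Fin n) K) : (Fin s → Fin n) → K :=
  fun j => ∑ α ∈ f.support, f.coeff α * ∏ i : Fin s, (α (j i) : K)

/-- `V_{A,σ}`: the `K`-span of the monomials `e^α` with `Aα = σ`. -/
noncomputable def fiberSpace (K : Type*) [CommRing K] {m n : ℕ}
    (A : Matrix (Fin m) (Fin n) ℕ) (σ : Fin m → ℕ) :
    Submodule K (MvPolynomial (Fin n) K) :=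
  Submodule.span K { f | ∃ a : Fin n → ℕ, (∀ j, ∑ i, A j i * a i = σ j) ∧ f = eMon K a }

/-- The sum `f_σ` of those terms of `f` whose monomial lies in `V_{A,σ}`. -/
noncomputable def fiberComponent {K : Type*} [CommRing K] {m n : ℕ}
    (A : Matrix (Fin m) (Fin n) ℕ) (σ : Fin m → ℕ)
    (f : MvPolynomial (Fin n) K) : MvPolynomial (Fin n) K :=
  ∑ α ∈ f.support.filter (fun α => ∀ j, ∑ i, A j i * α i = σ j),
    monomial α (f.coeff α)

/-- For a prime ideal `I`, the `t`-th symbolic power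
`I^{(t)} = { f | f·g ∈ I^t for some g ∉ I }`. -/
def symbolicPower {R : Type*} [CommRing R] (I : Ideal R) (t : ℕ) : Set R :=
  { f | ∃ g, g ∉ I ∧ f * g ∈ I ^ t }

/-- The saturation `I : x^∞ = { f | x^k f ∈ I for some k }`. -/
def satPow {R : Type*} [CommRing R] (I : Ideal R) (x : R) : Ideal R where
  carrier := { f | ∃ k : ℕ, x ^ k * f ∈ I }
  zero_mem' := ⟨0, by simp⟩
  add_mem' := by
    rintro a b ⟨k, hk⟩ ⟨l, hl⟩
    refine ⟨k + l, ?_⟩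
    have h : x ^ (k + l) * (a + b) = x ^ l * (x ^ k * a) + x ^ k * (x ^ l * b) := by
      ring
    rw [h]
    exact Ideal.add_mem _ (Ideal.mul_mem_left _ _ hk) (Ideal.mul_mem_left _ _ hl)
  smul_mem' := by
    rintro c a ⟨k, hk⟩
    refine ⟨k, ?_⟩
    have h : x ^ k * (c • a) = c * (x ^ k * a) := by
      rw [smul_eq_mul]; ring
    rw [h]
    exact Ideal.mul_mem_left _ _ hk

/-- The positive part `u^+` of an integer vector. -/
def pPart {n : ℕ} (u : Fin n → ℤ) : Fin n → ℕ := fun i => (u i).toNat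

/-- The negative part `u^-` of an integer vector. -/
def nPart {n : ℕ} (u : Fin n → ℤ) : Fin n → ℕ := fun i => (-u i).toNat

/-- The binomial `f_u = e^{u^+} - e^{u^-}`. -/
noncomputable def binom (K : Type*) [CommRing K] {n : ℕ} (u : Fin n → ℤ) :
    MvPolynomial (Fin n) K := eMon K (pPart u) - eMon K (nPart u)

/-- The lattice `ker A ⊆ ℤ^n`. -/
def matKerZ {m n : ℕ} (A : Matrix (Fin m) (Fin n) ℕ) : Set (Fin n → ℤ) :=
  { u | ∀ j, ∑ i, (A j i : ℤ) * u i = 0 }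

/-- The product of all the variables `m = e_1 ⋯ e_n`. -/
noncomputable def mProd (K : Type*) [CommSemiring K] (n : ℕ) :
    MvPolynomial (Fin n) K := ∏ i, X i

/-- For `σ ≠ 0` and `s ≥ 1`,
`ker(π^{(s)}|_{V_{A,σ}}) ⊆ ker(π^{(s-1)}|_{V_{A,σ}})`. -/
theorem ker_piMap_subset
    {K : Type*} [Field K] [IsAlgClosed K] [CharZero K]
    {m n : ℕ} (A : Matrix (Fin m) (Fin n) ℕ)
    (hA : ∀ i, ∃ j, A j i ≠ 0)
    (σ : Fin m → ℕ) (hσ : σ ≠ 0) (s : ℕ) (hs : 1 ≤ s)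
    (f : MvPolynomial (Fin n) K) (hf : f ∈ fiberSpace K A σ)
    (h : piMap K s f = 0) :
    piMap K (s - 1) f = 0 := by
  obtain ⟨t, rfl⟩ : ∃ t, s = t + 1 := ⟨s - 1, (Nat.succ_pred_eq_of_pos hs).symm⟩
  have hsupp : ∀ α ∈ f.support, ∀ j, ∑ i, A j i * α i = σ j := by
    refine Submodule.span_induction ?_ ?_ ?_ ?_ hf
    · rintro g ⟨a, ha, rfl⟩ α hα j
      classical
      have hgm : eMon K a = monomial (Finsupp.equivFunOnFinite.symm a) (1 : K) := by
        rw [← MvPolynomial.prod_X_pow_eq_monomial]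
        refine Finset.prod_subset (Finset.subset_univ _) ?_ |>.symm
        intro x _ hx
        have hx0 : a x = 0 := by simpa [Finsupp.notMem_support_iff] using hx
        show X x ^ a x = 1
        simp [hx0]
      rw [hgm] at hα
      simp only [MvPolynomial.support_monomial, one_ne_zero, if_false,
        Finset.mem_singleton] at hα
      subst hα
      simpa using ha j
    · simp
    · intro g₁ g₂ _ _ h1 h2 α hα j
      rcases Finset.mem_union.1 (MvPolynomial.support_add hα) with h' | h'
      · exact h1 α h' j
      · exact h2 α h' j
    · intro c g _ hg α hα j
      exact hg α (MvPolynomial.support_smul hα) j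
  show piMap K t f = 0
  obtain ⟨j₀, hj₀⟩ : ∃ j, σ j ≠ 0 := by
    by_contra hc; push_neg at hc; exact hσ (funext hc)
  funext j
  have key : ∀ k : Fin n, piMap K (t + 1) f (Fin.snoc j k : Fin (t+1) → Fin n) = 0 := fun k => congrFun h _
  have h0 : ∑ k : Fin n, (A j₀ k : K) * piMap K (t + 1) f (Fin.snoc j k : Fin (t+1) → Fin n) = 0 := by
    simp [key]
  unfold piMap at h0
  simp only [Finset.mul_sum] at h0
  rw [Finset.sum_comm] at h0
  have hmain : (σ j₀ : K) * (∑ α ∈ f.support, f.coeff α * ∏ i : Fin t, (α (j i) : K)) = 0 := by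
      rw [← h0]
      rw [Finset.mul_sum]
      refine Finset.sum_congr rfl fun α hα => ?_
      have hprod : ∀ k : Fin n, (∏ i : Fin (t + 1), (α ((Fin.snoc j k : Fin (t+1) → Fin n) i) : K))
          = (∏ i : Fin t, (α (j i) : K)) * (α k : K) := by
        intro k
        rw [Fin.prod_univ_castSucc]
        simp
      calc (σ j₀ : K) * (f.coeff α * ∏ i : Fin t, (α (j i) : K))
          = (f.coeff α * ∏ i : Fin t, (α (j i) : K)) * (∑ k, (A j₀ k : K) * (α k : K)) := by
            have : (∑ k, (A j₀ k : K) * (α k : K)) = ((∑ k, A j₀ k * α k : ℕ) : K) := by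
              push_cast; ring_nf
            rw [this, hsupp α hα j₀]; ring
        _ = ∑ k, (A j₀ k : K) * (f.coeff α * ∏ i : Fin (t + 1), (α ((Fin.snoc j k : Fin (t+1) → Fin n) i) : K)) := by
            rw [Finset.mul_sum]
            refine Finset.sum_congr rfl fun k _ => ?_
            rw [hprod k]; ring
  have hσK : (σ j₀ : K) ≠ 0 := Nat.cast_ne_zero.mpr hj₀
  rcases mul_eq_zero.1 hmain with h' | h'
  · exact absurd h' hσK
  · simpa [piMap, Nat.add_sub_cancel] using h'
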